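/- Let F be a linearly ordered field with integer part I and let α = p/q > 1 where p ∈ I^{≥0}, q ∈ I^{>0}. Then N_α is the union over r ∈ I with 0 ≤ r < q of the arithmetic progressions pI^{≥0} + ⌊pr/q⌋, and the arithmetic progression pI^{≥0} + (p−1) is contained in I^{≥0} \ N_α. -/

import Mathlib

/-- `N_α`: the set `{⌊n·α⌋ : n ∈ I, n ≥ 0}`, where `fl` is the floor function
associated to the integer part `I` of `F`. -/
def Nset {F : Type*} [Field F] [LinearOrder F] [IsStrictOrderedRing F] (I : Subring F) (fl : F → F) (α : F) : Set F :=
  {y | ∃ n, n ∈ I ∧ 0 ≤ n ∧ y = fl (n * α)}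

/-- `I^{≥0}`: the nonnegative elements of `I`. -/
def Inonneg {F : Type*} [Field F] [LinearOrder F] [IsStrictOrderedRing F] (I : Subring F) : Set F :=
  {n | n ∈ I ∧ 0 ≤ n}

/-- The arithmetic progression `m·I^{≥0} + k = {m·t + k : t ∈ I, t ≥ 0}`. -/
def AP {F : Type*} [Field F] [LinearOrder F] [IsStrictOrderedRing F] (I : Subring F) (m k : F) : Set F :=
  {y | ∃ t, t ∈ I ∧ 0 ≤ t ∧ y = m * t + k}

theorem stmt_1 {F : Type*} [Field F] [LinearOrder F] [IsStrictOrderedRing F] (I : Subring F) (fl : F → F)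
    (hdisc : ∀ x ∈ I, ¬(0 < x ∧ x < 1))
    (hfl : ∀ x : F, fl x ∈ I ∧ fl x ≤ x ∧ x < fl x + 1)
    (p q : F) (hp : p ∈ I) (hp0 : 0 ≤ p) (hq : q ∈ I) (hq0 : 0 < q)
    (hα : 1 < p / q) :
    Nset I fl (p / q) =
      {y | ∃ r, r ∈ I ∧ 0 ≤ r ∧ r < q ∧ y ∈ AP I p (fl (p * r / q))} ∧
    AP I p (p - 1) ⊆ Inonneg I \ Nset I fl (p / q) := by
  have hq1 : (1:F) ≤ q := by
    by_contra h
    exact hdisc q hq ⟨hq0, not_le.mp h⟩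
  have hpq : q < p := (one_lt_div hq0).mp hα
  have hp1 : 0 < p := lt_trans hq0 hpq
  have huniq : ∀ a b x : F, a ∈ I → b ∈ I → a ≤ x → x < a + 1 → b ≤ x → x < b + 1 → a = b := by
    intro a b x ha hb hax hxa hbx hxb
    by_contra hne
    rcases lt_or_gt_of_ne hne with h | h
    · exact hdisc (b - a) (I.sub_mem hb ha) ⟨by linarith, by linarith⟩
    · exact hdisc (a - b) (I.sub_mem ha hb) ⟨by linarith, by linarith⟩
  have hfl_add : ∀ (x m : F), m ∈ I → fl (x + m) = fl x + m := by
    intro x m hm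
    obtain ⟨h1, h2, h3⟩ := hfl (x + m)
    obtain ⟨h4, h5, h6⟩ := hfl x
    exact huniq _ _ (x + m) h1 (I.add_mem h4 hm) h2 h3 (by linarith) (by linarith)
  have hqne : q ≠ 0 := ne_of_gt hq0
  constructor
  · ext y
    simp only [Nset, AP, Set.mem_setOf_eq]
    constructor
    · rintro ⟨n, hn, hn0, rfl⟩
      obtain ⟨htI, ht1, ht2⟩ := hfl (n / q)
      set t := fl (n / q) with htdef
      have hqt : q * t ≤ n := by
        have := mul_le_mul_of_nonneg_left ht1 hq0.le
        rwa [mul_div_cancel₀ n hqne] at this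
      have hqt2 : n < q * t + q := by
        have := mul_lt_mul_of_pos_left ht2 hq0
        rw [mul_div_cancel₀ n hqne] at this
        linarith [this]
      have ht0 : 0 ≤ t := by
        by_contra h
        push_neg at h
        have hle : t ≤ -1 := by
          by_contra h2
          push_neg at h2
          exact hdisc (-t) (I.neg_mem htI) ⟨by linarith, by linarith⟩
        nlinarith
      refine ⟨n - q * t, I.sub_mem hn (I.mul_mem hq htI), by linarith, by linarith,
        t, htI, ht0, ?_⟩
      have hsplit : n * (p / q) = p * (n - q * t) / q + p * t := by
        field_simp
        ring
      rw [hsplit, hfl_add _ _ (I.mul_mem hp htI)]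
      ring
    · rintro ⟨r, hr, hr0, hrq, t, htI, ht0, rfl⟩
      refine ⟨q * t + r, I.add_mem (I.mul_mem hq htI) hr, by positivity, ?_⟩
      have hsplit : (q * t + r) * (p / q) = p * r / q + p * t := by
        field_simp
        ring
      rw [hsplit, hfl_add _ _ (I.mul_mem hp htI)]
      ring
  · rintro y ⟨t, htI, ht0, rfl⟩
    constructor
    · exact ⟨I.add_mem (I.mul_mem hp htI) (I.sub_mem hp I.one_mem), by nlinarith⟩
    · rintro ⟨n, hn, hn0, heq⟩
      obtain ⟨h1, h2, h3⟩ := hfl (n * (p / q))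
      rw [← heq] at h2 h3
      have hkey : n * (p / q) * q = n * p := by field_simp
      have hA : (p * t + (p - 1)) * q ≤ n * p := by
        calc (p * t + (p - 1)) * q ≤ n * (p / q) * q :=
          mul_le_mul_of_nonneg_right h2 hq0.le
        _ = n * p := hkey
      have hB : n * p < (p * t + (p - 1) + 1) * q := by
        calc n * p = n * (p / q) * q := hkey.symm
        _ < (p * t + (p - 1) + 1) * q := mul_lt_mul_of_pos_right h3 hq0
      have hn_lt : n < q * (t + 1) := by nlinarith
      have hn_gt : p * (q * (t + 1) - n) ≤ q := by nlinarith
      refine hdisc (q * (t + 1) - n)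
        (I.sub_mem (I.mul_mem hq (I.add_mem htI I.one_mem)) hn) ⟨by linarith, ?_⟩
      nlinarith
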